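/- Let A be a real m × n matrix of rank n (n ≤ m), and let α ∈ (0,1). Then there exist a matrix S ∈ R^{m×n} whose columns are unit vectors with all pairwise inner products equal to α, and an upper triangular matrix R ∈ R^{n×n}, such that A = S R. -/

import Mathlib

open Matrix

/-- Conjugation of a positive definite matrix by an invertible matrix is positive definite. -/
lemma posDef_conj_of_isUnit {k : Type*} [Fintype k] [DecidableEq k]
    {S : Matrix k k ℝ} (hS : S.PosDef) {W : Matrix k k ℝ} (hW : IsUnit W) :
    (W * S * Wᴴ).PosDef := by
  rw [posDef_iff_dotProduct_mulVec]
  constructor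
  · exact isHermitian_mul_mul_conjTranspose W hS.1
  · intro x hx
    have hWH : IsUnit Wᴴ := (Matrix.isUnit_conjTranspose _).mpr hW
    have hx' : Wᴴ *ᵥ x ≠ 0 := by
      intro h
      exact hx (Matrix.mulVec_injective_iff_isUnit.mpr hWH (by simpa using h))
    have key := (posDef_iff_dotProduct_mulVec.mp hS).2 hx'
    have heq : star x ⬝ᵥ ((W * S * Wᴴ) *ᵥ x) = star (Wᴴ *ᵥ x) ⬝ᵥ (S *ᵥ (Wᴴ *ᵥ x)) := by
      rw [← mulVec_mulVec, ← mulVec_mulVec, star_mulVec, conjTranspose_conjTranspose,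
        dotProduct_mulVec]
    rw [heq]
    exact key

/-- Real Cholesky decomposition: a positive definite real matrix `P` can be written
as `Uᵀ * U` with `U` upper triangular and invertible. -/
lemma cholesky_upper {k : Type*} [Fintype k] [LinearOrder k] [WellFoundedLT k]
    [LocallyFiniteOrderBot k] {P : Matrix k k ℝ} (hP : P.PosDef) :
    ∃ U : Matrix k k ℝ, U.BlockTriangular id ∧ Function.Injective U.mulVec ∧ Uᵀ * U = P := by
  set W := LDL.lowerInv hP with hW
  set L := LDL.lower hP with hL
  set d := LDL.diagEntries hP with hd
  haveI : Invertible W := LDL.invertibleLowerInv hP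
  -- positivity of the diagonal entries
  have hdiagPD : (LDL.diag hP).PosDef := by
    rw [LDL.diag_eq_lowerInv_conj hP]
    exact posDef_conj_of_isUnit hP (isUnit_of_invertible W)
  have hdpos : ∀ i, 0 < d i := by
    have h2 := (posDef_diagonal_iff (d := d)).mp (by simpa [LDL.diag] using hdiagPD)
    intro i; simpa using h2 i
  -- triangularity of W and L
  have hWtri : W.BlockTriangular (OrderDual.toDual : k → kᵒᵈ) := fun i j hij =>
    LDL.lowerInv_triangular hP hij
  have hLtri : L.BlockTriangular (OrderDual.toDual : k → kᵒᵈ) := by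
    rw [hL, LDL.lower]
    exact blockTriangular_inv_of_blockTriangular hWtri
  haveI : Invertible L := by rw [hL, LDL.lower]; infer_instance
  have hLunit : IsUnit L := isUnit_of_invertible L
  set s : k → ℝ := fun i => Real.sqrt (d i) with hs
  set U : Matrix k k ℝ := Matrix.diagonal s * Lᵀ with hU
  refine ⟨U, ?_, ?_, ?_⟩
  · -- upper triangular
    intro i j hij
    have hLji : L j i = 0 := hLtri (by exact hij)
    simp [hU, diagonal_mul, transpose_apply, hLji]
  · -- invertible
    have hsunit : IsUnit (Matrix.diagonal s) := by
      rw [Matrix.isUnit_iff_isUnit_det, det_diagonal]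
      exact isUnit_iff_ne_zero.mpr
        (Finset.prod_ne_zero_iff.mpr fun i _ => (Real.sqrt_pos.mpr (hdpos i)).ne')
    have hUunit : IsUnit U := hsunit.mul ((Matrix.isUnit_transpose _).mpr hLunit)
    exact Matrix.mulVec_injective_iff_isUnit.mpr hUunit
  · -- Uᵀ * U = P
    have hss : Matrix.diagonal s * Matrix.diagonal s = LDL.diag hP := by
      have hfun : (fun i => s i * s i) = d := funext fun i => Real.mul_self_sqrt (hdpos i).le
      rw [diagonal_mul_diagonal, hfun, LDL.diag, hd]
    calc Uᵀ * U = L * (Matrix.diagonal s * Matrix.diagonal s) * Lᵀ := by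
          rw [hU, transpose_mul, transpose_transpose, diagonal_transpose]
          simp only [Matrix.mul_assoc]
      _ = L * LDL.diag hP * Lᴴ := by
          rw [hss, conjTranspose_eq_transpose_of_trivial, Matrix.mul_assoc]
      _ = P := LDL.lower_conj_diag hP

lemma dotProduct_self_pos' {k : Type*} [Fintype k] {v : k → ℝ} (hv : v ≠ 0) :
    0 < v ⬝ᵥ v := by
  obtain ⟨i, hi⟩ := Function.ne_iff.mp hv
  exact Finset.sum_pos' (fun j _ => mul_self_nonneg _)
    ⟨i, Finset.mem_univ i, mul_self_pos.mpr (by simpa using hi)⟩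

set_option maxHeartbeats 1000000 in
theorem SR_factorization (m n : ℕ) (hnm : n ≤ m)
    (A : Matrix (Fin m) (Fin n) ℝ) (hrank : A.rank = n)
    (α : ℝ) (hα0 : 0 < α) (hα1 : α < 1) :
    ∃ (S : Matrix (Fin m) (Fin n) ℝ) (R : Matrix (Fin n) (Fin n) ℝ),
      (∀ j, ∑ i, S i j * S i j = 1) ∧
      (∀ j j', j ≠ j' → ∑ i, S i j * S i j' = α) ∧
      R.BlockTriangular id ∧ A = S * R := by
  classical
  haveI hwf : WellFoundedLT (Fin n) := inferInstance
  haveI hlf : LocallyFiniteOrderBot (Fin n) := inferInstance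
  -- A has trivial kernel
  have hker : ∀ x : Fin n → ℝ, x ≠ 0 → A *ᵥ x ≠ 0 := by
    have hk : LinearMap.ker A.mulVecLin = ⊥ := by
      have h1 := LinearMap.finrank_range_add_finrank_ker A.mulVecLin
      rw [Module.finrank_pi] at h1
      have h2 : Module.finrank ℝ (LinearMap.range A.mulVecLin) = n := hrank
      rw [h2, Fintype.card_fin] at h1
      have h3 : Module.finrank ℝ (LinearMap.ker A.mulVecLin) = 0 := by omega
      exact Submodule.finrank_eq_zero.mp h3
    intro x hx h
    exact hx (by
      have : x ∈ LinearMap.ker A.mulVecLin := h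
      rwa [hk, Submodule.mem_bot] at this)
  -- Aᵀ * A is positive definite
  have hPA : (Aᵀ * A).PosDef := by
    rw [posDef_iff_dotProduct_mulVec]
    constructor
    · rw [← conjTranspose_eq_transpose_of_trivial]
      exact isHermitian_conjTranspose_mul_self A
    · intro x hx
      have heq : star x ⬝ᵥ ((Aᵀ * A) *ᵥ x) = (A *ᵥ x) ⬝ᵥ (A *ᵥ x) := by
        rw [← mulVec_mulVec, dotProduct_mulVec, star_trivial, vecMul_transpose]
      rw [heq]
      exact dotProduct_self_pos' (hker x hx)
  -- The Gram matrix G of the equiangular frame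
  set G : Matrix (Fin n) (Fin n) ℝ :=
    (1 - α) • (1 : Matrix (Fin n) (Fin n) ℝ) + α • Matrix.of (fun _ _ => (1 : ℝ)) with hGdef
  have hGentry : ∀ i j : Fin n, G i j = if i = j then 1 else α := by
    intro i j
    by_cases h : i = j <;> simp [hGdef, h, Matrix.one_apply]
  have hG : G.PosDef := by
    rw [posDef_iff_dotProduct_mulVec]
    constructor
    · show Gᴴ = G
      ext i j
      simp only [conjTranspose_apply, star_trivial]
      rw [hGentry, hGentry]
      by_cases h : i = j <;> simp [h, eq_comm]
    · intro x hx
      have hmv : G *ᵥ x = (1 - α) • x + α • (fun _ => ∑ j, x j) := by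
        rw [hGdef, add_mulVec, smul_mulVec, smul_mulVec, one_mulVec]
        congr 1
        · funext i
          simp [mulVec, dotProduct]
      have heq : star x ⬝ᵥ (G *ᵥ x) = (1 - α) * (x ⬝ᵥ x) + α * (∑ j, x j) ^ 2 := by
        rw [hmv, star_trivial, dotProduct_add, dotProduct_smul, dotProduct_smul]
        congr 1
        rw [smul_eq_mul]
        congr 1
        simp [dotProduct, Finset.sum_mul, sq]
      rw [heq]
      have h1 : 0 < (1 - α) * (x ⬝ᵥ x) :=
        mul_pos (by linarith) (dotProduct_self_pos' hx)
      have h2 : 0 ≤ α * (∑ j, x j) ^ 2 := mul_nonneg hα0.le (sq_nonneg _)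
      linarith
  obtain ⟨UA, hUAtri, hUAunit, hUA⟩ := cholesky_upper hPA
  obtain ⟨UG, hUGtri, hUGunit, hUG⟩ := cholesky_upper hG
  haveI : Invertible UA := (Matrix.mulVec_injective_iff_isUnit.mp hUAunit).invertible
  haveI : Invertible UG := (Matrix.mulVec_injective_iff_isUnit.mp hUGunit).invertible
  set S : Matrix (Fin m) (Fin n) ℝ := A * UA⁻¹ * UG with hSdef
  have hStS : Sᵀ * S = G := by
    rw [hSdef, transpose_mul, transpose_mul, transpose_nonsing_inv]
    calc UGᵀ * (UAᵀ⁻¹ * Aᵀ) * (A * UA⁻¹ * UG)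
        = UGᵀ * (UAᵀ⁻¹ * (Aᵀ * A * (UA⁻¹ * UG))) := by simp only [Matrix.mul_assoc]
      _ = UGᵀ * (UAᵀ⁻¹ * (UAᵀ * UA * (UA⁻¹ * UG))) := by rw [← hUA]
      _ = UGᵀ * (UAᵀ⁻¹ * (UAᵀ * (UA * (UA⁻¹ * UG)))) := by simp only [Matrix.mul_assoc]
      _ = UGᵀ * UG := by
          rw [Matrix.mul_inv_cancel_left_of_invertible,
            Matrix.inv_mul_cancel_left_of_invertible]
      _ = G := hUG
  have hEntry : ∀ j j' : Fin n, ∑ i, S i j * S i j' = if j = j' then 1 else α := by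
    intro j j'
    have h3 : (Sᵀ * S) j j' = G j j' := by rw [hStS]
    rw [hGentry] at h3
    rw [← h3, mul_apply]
    simp [transpose_apply]
  refine ⟨S, UG⁻¹ * UA, ?_, ?_, ?_, ?_⟩
  · intro j; rw [hEntry]; simp
  · intro j j' hjj'; rw [hEntry]; simp [hjj']
  · exact (blockTriangular_inv_of_blockTriangular hUGtri).mul hUAtri
  · rw [hSdef]
    simp only [Matrix.mul_assoc, Matrix.mul_inv_cancel_left_of_invertible,
      Matrix.inv_mul_cancel_left_of_invertible, Matrix.inv_mul_of_invertible, Matrix.mul_one]
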